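/- For basic formulas (no N_i operators) in ONL_n^- of maximal a-depth k and b-depth j, truth at a world w of the K45_n canonical model coincides with truth at the corresponding (k,j)-model: (M^c, w) ⊨ α iff (e_a^{[w],k}, e_b^{[w],j}, [w]) ⊨ α, where the (k,j)-correspondence model is built from the canonical accessibility relations. -/

import Mathlib

abbrev Atom := ℕ
abbrev World := Set Atom

/-- `KStr k` : the type of `k`-structures. A 0-structure is the trivial
empty object `PUnit.unit` (playing the role of `∅`); a `(k+1)`-structure is a
set of pairs of a world and a `k`-structure. Thus a 1-structure is a subset of
`W × {∅}`. -/
def KStr : ℕ → Type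
  | 0 => PUnit
  | (k+1) => Set (World × KStr k)


def toSet {k : ℕ} (e : KStr (k+1)) : Set (World × KStr k) := e

instance {k : ℕ} : Membership (World × KStr k) (KStr (k+1)) :=
  inferInstanceAs (Membership _ (Set (World × KStr k)))
instance {k : ℕ} : EmptyCollection (KStr (k+1)) :=
  inferInstanceAs (EmptyCollection (Set (World × KStr k)))
instance {k : ℕ} : Union (KStr (k+1)) :=
  inferInstanceAs (Union (Set (World × KStr k)))
instance {k : ℕ} : Compl (KStr (k+1)) :=
  inferInstanceAs (Compl (Set (World × KStr k)))

def unit0 : KStr 0 := PUnit.unit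

/-- Formulas of the propositional multi-agent only-knowing language ONL_n
with modal operators L_a, N_a, L_b, N_b. -/
inductive Formula : Type
  | atom : Atom → Formula
  | fls  : Formula
  | neg  : Formula → Formula
  | or   : Formula → Formula → Formula
  | La   : Formula → Formula
  | Na   : Formula → Formula
  | Lb   : Formula → Formula
  | Nb   : Formula → Formula

def Formula.and (α β : Formula) : Formula := .neg (.or (.neg α) (.neg β))
def Formula.imp (α β : Formula) : Formula := .or (.neg α) β
/-- O_a α := L_a α ∧ N_a ¬α -/
def Formula.Oa (α : Formula) : Formula := (Formula.La α).and (Formula.Na (.neg α))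
/-- O_b α := L_b α ∧ N_b ¬α -/
def Formula.Ob (α : Formula) : Formula := (Formula.Lb α).and (Formula.Nb (.neg α))

/-- Satisfaction at a (k,j)-model `(ea, eb, w)`. -/
def sat : (k : ℕ) → (j : ℕ) → KStr k → KStr j → World → Formula → Prop
  | _, _, _, _, w, .atom p => p ∈ w
  | _, _, _, _, _, .fls => False
  | k, j, ea, eb, w, .neg α => ¬ sat k j ea eb w α
  | k, j, ea, eb, w, .or α β => sat k j ea eb w α ∨ sat k j ea eb w β
  | 0, _, _, _, _, .La _ => True
  | (k+1), _, ea, _, _, .La α => ∀ p ∈ ea, sat (k+1) k ea p.2 p.1 α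
  | 0, _, _, _, _, .Na _ => True
  | (k+1), _, ea, _, _, .Na α => ∀ p : World × KStr k, p ∉ ea → sat (k+1) k ea p.2 p.1 α
  | _, 0, _, _, _, .Lb _ => True
  | k, (j+1), _, eb, _, .Lb α => ∀ p ∈ eb, sat j (j+1) p.2 eb p.1 α
  | _, 0, _, _, _, .Nb _ => True
  | k, (j+1), _, eb, _, .Nb α => ∀ p : World × KStr j, p ∉ eb → sat j (j+1) p.2 eb p.1 α

mutual
/-- a-depth of a formula -/
def depthA : Formula → ℕ
  | .atom _ => 1
  | .fls => 1
  | .neg α => depthA α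
  | .or α β => max (depthA α) (depthA β)
  | .La α => depthA α
  | .Na α => depthA α
  | .Lb α => depthB α + 1
  | .Nb α => depthB α + 1
/-- b-depth of a formula -/
def depthB : Formula → ℕ
  | .atom _ => 1
  | .fls => 1
  | .neg α => depthB α
  | .or α β => max (depthB α) (depthB β)
  | .Lb α => depthB α
  | .Nb α => depthB α
  | .La α => depthA α + 1
  | .Na α => depthA α + 1
end

/-- the restriction `e↓ₖ` of a structure -/
def restrict : (k : ℕ) → {m : ℕ} → KStr m → KStr k
  | 0, _, _ => unit0
  | (k+1), 0, _ => (∅ : Set (World × KStr k))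
  | (k+1), (_+1), e => (fun p => (p.1, restrict k p.2)) '' (toSet e)

/-- validity: truth at all (k,j)-models of appropriate depth -/
def valid (φ : Formula) : Prop :=
  ∀ (k j : ℕ), depthA φ ≤ k → depthB φ ≤ j →
    ∀ (ea : KStr k) (eb : KStr j) (w : World), sat k j ea eb w φ

def satisfiable (φ : Formula) : Prop :=
  ∃ (k j : ℕ) (ea : KStr k) (eb : KStr j) (w : World),
    depthA φ ≤ k ∧ depthB φ ≤ j ∧ sat k j ea eb w φ

/-- objective (non-modal) formulas -/
def objective : Formula → Prop
  | .atom _ => True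
  | .fls => True
  | .neg α => objective α
  | .or α β => objective α ∧ objective β
  | .La _ => False
  | .Na _ => False
  | .Lb _ => False
  | .Nb _ => False

/-- a-objective: all outermost modal operators are of agent b -/
def aObjective : Formula → Prop
  | .atom _ => True
  | .fls => True
  | .neg α => aObjective α
  | .or α β => aObjective α ∧ aObjective β
  | .La _ => False
  | .Na _ => False
  | .Lb _ => True
  | .Nb _ => True

/-- b-objective: all outermost modal operators are of agent a -/
def bObjective : Formula → Prop
  | .atom _ => True
  | .fls => True
  | .neg α => bObjective α
  | .or α β => bObjective α ∧ bObjective β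
  | .La _ => True
  | .Na _ => True
  | .Lb _ => False
  | .Nb _ => False

/-- basic formulas: no N_a, N_b -/
def basic : Formula → Prop
  | .atom _ => True
  | .fls => True
  | .neg α => basic α
  | .or α β => basic α ∧ basic β
  | .La α => basic α
  | .Lb α => basic α
  | .Na _ => False
  | .Nb _ => False

/-- set of a-objective formulas of b-depth ≤ d true at `(∅, e, w)` -/
def aTheory (d : ℕ) (e : KStr d) (w : World) : Set Formula :=
  {φ | aObjective φ ∧ depthB φ ≤ d ∧ sat 0 d unit0 e w φ}

def bTheory (d : ℕ) (e : KStr d) (w : World) : Set Formula :=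
  {φ | bObjective φ ∧ depthA φ ≤ d ∧ sat d 0 e unit0 w φ}

/-- Obj⁺_a(e_a) -/
def ObjA (d : ℕ) (ea : KStr (d+1)) : Set (Set Formula) :=
  {T | ∃ p : World × KStr d, p ∈ ea ∧ T = aTheory d p.2 p.1}

def ObjB (d : ℕ) (eb : KStr (d+1)) : Set (Set Formula) :=
  {T | ∃ p : World × KStr d, p ∈ eb ∧ T = bTheory d p.2 p.1}

/-- maximally satisfiable set of a-objective formulas of b-depth ≤ d -/
def maxSatA (d : ℕ) (S : Set Formula) : Prop :=
  (∀ φ ∈ S, aObjective φ ∧ depthB φ ≤ d) ∧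
  (∃ (e : KStr d) (w : World), ∀ φ ∈ S, sat 0 d unit0 e w φ) ∧
  (∀ ψ, aObjective ψ → depthB ψ ≤ d → ψ ∉ S →
    ¬ ∃ (e : KStr d) (w : World), ∀ φ ∈ insert ψ S, sat 0 d unit0 e w φ)

def maxSatB (d : ℕ) (S : Set Formula) : Prop :=
  (∀ φ ∈ S, bObjective φ ∧ depthA φ ≤ d) ∧
  (∃ (e : KStr d) (w : World), ∀ φ ∈ S, sat d 0 e unit0 w φ) ∧
  (∀ ψ, bObjective ψ → depthA ψ ≤ d → ψ ∉ S →
    ¬ ∃ (e : KStr d) (w : World), ∀ φ ∈ insert ψ S, sat d 0 e unit0 w φ)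

/-- `onlAux bA bB φ`: φ is admissible where `bA` records that N_a is banned
(we are in the scope of a b-modality) and `bB` that N_b is banned. -/
def onlAux : Bool → Bool → Formula → Prop
  | _, _, .atom _ => True
  | _, _, .fls => True
  | bA, bB, .neg α => onlAux bA bB α
  | bA, bB, .or α β => onlAux bA bB α ∧ onlAux bA bB β
  | bA, _, .La α => onlAux bA true α
  | bA, _, .Na α => bA = false ∧ onlAux bA true α
  | _, bB, .Lb α => onlAux true bB α
  | _, bB, .Nb α => bB = false ∧ onlAux true bB α

/-- ONL_n^- : no N_j in the scope of an L_i or N_i with i ≠ j -/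
def ONLminus (φ : Formula) : Prop := onlAux false false φ

inductive BoolComb (S : Set Formula) : Formula → Prop
  | base {φ} : φ ∈ S → BoolComb S φ
  | neg {φ} : BoolComb S φ → BoolComb S (.neg φ)
  | or {φ ψ} : BoolComb S φ → BoolComb S ψ → BoolComb S (.or φ ψ)

def stepL (S : Set Formula) : Set Formula :=
  {φ | BoolComb (S ∪ {ψ | ∃ α ∈ S, ψ = .La α ∨ ψ = .Na α ∨ ψ = .Lb α ∨ ψ = .Nb α}) φ}

/-- the hierarchy ONL_n^t (t ≥ 1), with ONL_n^1 = ONL_n^- -/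
def ONLt (t : ℕ) : Set Formula := stepL^[t-1] {φ | ONLminus φ}

def conjList : List Formula → Formula
  | [] => .neg .fls
  | (φ :: l) => φ.and (conjList l)

/-- instance of a propositional tautology -/
def Taut (φ : Formula) : Prop :=
  ∀ v : Formula → Bool, (∀ α, v (.neg α) = !v α) →
    (∀ α β, v (.or α β) = (v α || v β)) → v .fls = false → v φ = true

/-- K45_n provability (two agents) -/
inductive K45 : Formula → Prop
  | taut {φ} : Taut φ → K45 φ
  | kA (α β : Formula) : K45 ((Formula.La (α.imp β)).imp ((Formula.La α).imp (Formula.La β)))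
  | kB (α β : Formula) : K45 ((Formula.Lb (α.imp β)).imp ((Formula.Lb α).imp (Formula.Lb β)))
  | fourA (α : Formula) : K45 ((Formula.La α).imp (Formula.La (Formula.La α)))
  | fourB (α : Formula) : K45 ((Formula.Lb α).imp (Formula.Lb (Formula.Lb α)))
  | fiveA (α : Formula) : K45 ((Formula.neg (Formula.La α)).imp (Formula.La (Formula.neg (Formula.La α))))
  | fiveB (α : Formula) : K45 ((Formula.neg (Formula.Lb α)).imp (Formula.Lb (Formula.neg (Formula.Lb α))))
  | mp {α β} : K45 (α.imp β) → K45 α → K45 β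
  | necA {α} : K45 α → K45 (Formula.La α)
  | necB {α} : K45 α → K45 (Formula.Lb α)

def ConsSet (Γ : Set Formula) : Prop :=
  ∀ l : List Formula, (∀ φ ∈ l, φ ∈ Γ) → ¬ K45 (Formula.neg (conjList l))

/-- basic maximally K45_n-consistent set -/
def MCS (Γ : Set Formula) : Prop :=
  (∀ φ ∈ Γ, basic φ) ∧ ConsSet Γ ∧ ∀ φ, basic φ → (φ ∈ Γ ∨ Formula.neg φ ∈ Γ)

/-- worlds of the K45_n canonical model -/
def CW := {Γ : Set Formula // MCS Γ}

def RA (Γ Δ : CW) : Prop := ∀ α, Formula.La α ∈ Γ.val → α ∈ Δ.val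
def RB (Γ Δ : CW) : Prop := ∀ α, Formula.Lb α ∈ Γ.val → α ∈ Δ.val

/-- truth of basic formulas at a world of the canonical model -/
def csat (Γ : CW) : Formula → Prop
  | .atom p => Formula.atom p ∈ Γ.val
  | .fls => False
  | .neg α => ¬ csat Γ α
  | .or α β => csat Γ α ∨ csat Γ β
  | .La α => ∀ Δ : CW, RA Γ Δ → csat Δ α
  | .Lb α => ∀ Δ : CW, RB Γ Δ → csat Δ α
  | .Na _ => True
  | .Nb _ => True

/-- the propositional valuation [w] of a canonical world -/
def wval (Γ : CW) : World := {p | Formula.atom p ∈ Γ.val}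

/-- the (k,j)-correspondence structures; `corr true` is agent a's structure,
`corr false` agent b's -/
def corr : Bool → (k : ℕ) → CW → KStr k
  | _, 0, _ => unit0
  | ag, (k+1), Γ =>
    {p : World × KStr k |
      ∃ Δ : CW, (if ag then RA Γ Δ else RB Γ Δ) ∧ p.1 = wval Δ ∧ p.2 = corr (!ag) k Δ}
lemma sat_La {k j ea eb w α} : sat (k+1) j ea eb w (.La α) ↔ ∀ p ∈ ea, sat (k+1) k ea p.2 p.1 α := by simp only [sat]
lemma sat_Lb {k j ea eb w α} : sat k (j+1) ea eb w (.Lb α) ↔ ∀ p ∈ eb, sat j (j+1) p.2 eb p.1 α := by simp only [sat]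
lemma sat_neg {k j ea eb w α} : sat k j ea eb w (.neg α) ↔ ¬ sat k j ea eb w α := by simp only [sat]
lemma sat_or {k j ea eb w α β} : sat k j ea eb w (.or α β) ↔ sat k j ea eb w α ∨ sat k j ea eb w β := by simp only [sat]
lemma sat_atom {k j ea eb w p} : sat k j ea eb w (.atom p) ↔ p ∈ w := by simp only [sat]
lemma sat_fls {k j ea eb w} : sat k j ea eb w .fls ↔ False := by simp only [sat]

lemma mem_corr {ag : Bool} {m : ℕ} {Γ : CW} {p : World × KStr m} :
    p ∈ corr ag (m+1) Γ ↔ ∃ Δ : CW, (if ag then RA Γ Δ else RB Γ Δ) ∧ p.1 = wval Δ ∧ p.2 = corr (!ag) m Δ := Iff.rfl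

lemma depth_pos : ∀ α, 1 ≤ depthA α ∧ 1 ≤ depthB α := by
  intro α; induction α <;> simp [depthA, depthB] at * <;> omega

lemma K45.neg_conj_pair {φ ψ : Formula} (h : K45 (φ.imp ψ)) :
    K45 (Formula.neg (conjList [φ, Formula.neg ψ])) := by
  refine K45.mp (K45.taut ?_) h
  intro v hneg hor hfls
  simp only [conjList, Formula.and, Formula.imp, hneg, hor, hfls]
  cases v φ <;> cases v ψ <;> simp

lemma mcs_not_both (Γ : CW) {φ : Formula} (h1 : φ ∈ Γ.val) (h2 : Formula.neg φ ∈ Γ.val) : False := by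
  apply Γ.2.2.1 [φ, Formula.neg φ]
    (by intro ψ hψ; simp at hψ; rcases hψ with h|h <;> subst h <;> assumption)
  apply K45.taut
  intro v hneg hor hfls
  simp only [conjList, Formula.and, hneg, hor, hfls]
  cases v φ <;> simp

lemma mcs_mp (Γ : CW) {φ ψ : Formula} (hφ : φ ∈ Γ.val) (himp : K45 (φ.imp ψ)) (hψ : basic ψ) :
    ψ ∈ Γ.val := by
  rcases Γ.2.2.2 ψ hψ with h | h
  · exact h
  · exact absurd (K45.neg_conj_pair himp)
      (Γ.2.2.1 [φ, Formula.neg ψ]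
        (by intro χ hχ; simp at hχ; rcases hχ with h'|h' <;> subst h' <;> assumption))

lemma RA_trans {Γ Δ Θ : CW} (h1 : RA Γ Δ) (h2 : RA Δ Θ) : RA Γ Θ := by
  intro α hα
  have hb : basic (Formula.La (Formula.La α)) := by
    have := Γ.2.1 _ hα; simpa [basic] using this
  exact h2 α (h1 _ (mcs_mp Γ hα (K45.fourA α) hb))

lemma RA_eucl {Γ Δ Θ : CW} (h1 : RA Γ Δ) (h2 : RA Γ Θ) : RA Δ Θ := by
  intro α hα
  have hb : basic (Formula.La α) := Δ.2.1 _ hα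
  have hLa : Formula.La α ∈ Γ.val := by
    rcases Γ.2.2.2 (.La α) hb with h | h
    · exact h
    · exfalso
      have h5 : Formula.La (Formula.neg (Formula.La α)) ∈ Γ.val :=
        mcs_mp Γ h (K45.fiveA α) (by simpa [basic] using hb)
      exact mcs_not_both Δ hα (h1 _ h5)
  exact h2 α hLa

lemma RB_trans {Γ Δ Θ : CW} (h1 : RB Γ Δ) (h2 : RB Δ Θ) : RB Γ Θ := by
  intro α hα
  have hb : basic (Formula.Lb (Formula.Lb α)) := by
    have := Γ.2.1 _ hα; simpa [basic] using this
  exact h2 α (h1 _ (mcs_mp Γ hα (K45.fourB α) hb))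

lemma RB_eucl {Γ Δ Θ : CW} (h1 : RB Γ Δ) (h2 : RB Γ Θ) : RB Δ Θ := by
  intro α hα
  have hb : basic (Formula.Lb α) := Δ.2.1 _ hα
  have hLb : Formula.Lb α ∈ Γ.val := by
    rcases Γ.2.2.2 (.Lb α) hb with h | h
    · exact h
    · exfalso
      have h5 : Formula.Lb (Formula.neg (Formula.Lb α)) ∈ Γ.val :=
        mcs_mp Γ h (K45.fiveB α) (by simpa [basic] using hb)
      exact mcs_not_both Δ hα (h1 _ h5)
  exact h2 α hLb

lemma corr_eq_A {Γ Δ : CW} (h : RA Γ Δ) (m : ℕ) :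
    corr true (m+1) Γ = corr true (m+1) Δ := by
  have : ∀ Θ : CW, RA Γ Θ ↔ RA Δ Θ := fun Θ => ⟨RA_eucl h, RA_trans h⟩
  show toSet (corr true (m+1) Γ) = toSet (corr true (m+1) Δ)
  ext p
  constructor <;> rintro ⟨Θ, hR, h1, h2⟩ <;> exact ⟨Θ, by simp_all, h1, h2⟩

lemma corr_eq_B {Γ Δ : CW} (h : RB Γ Δ) (m : ℕ) :
    corr false (m+1) Γ = corr false (m+1) Δ := by
  have : ∀ Θ : CW, RB Γ Θ ↔ RB Δ Θ := fun Θ => ⟨RB_eucl h, RB_trans h⟩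
  show toSet (corr false (m+1) Γ) = toSet (corr false (m+1) Δ)
  ext p
  constructor <;> rintro ⟨Θ, hR, h1, h2⟩ <;> exact ⟨Θ, by simp_all, h1, h2⟩
lemma sat_La_corr (β : Formula)
    (IH : ∀ m, depthA β ≤ m+1 → ∀ Δ : CW,
      (csat Δ β ↔ sat (m+1) m (corr true (m+1) Δ) (corr false m Δ) (wval Δ) β))
    (m : ℕ) (h : depthA β ≤ m+1) (Γ : CW) :
    csat Γ (.La β) ↔ ∀ p ∈ corr true (m+1) Γ, sat (m+1) m (corr true (m+1) Γ) p.2 p.1 β := by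
  constructor
  · intro hc p hp
    rcases mem_corr.1 hp with ⟨Δ, hR, h1, h2⟩
    simp only [if_true] at hR
    rw [h1, h2, corr_eq_A hR]
    exact (IH m h Δ).1 (hc Δ hR)
  · intro hs Δ hR
    have hmem : (⟨wval Δ, corr false m Δ⟩ : World × KStr m) ∈ corr true (m+1) Γ :=
      mem_corr.2 ⟨Δ, by simpa using hR, rfl, rfl⟩
    have := hs _ hmem
    rw [corr_eq_A hR] at this
    exact (IH m h Δ).2 this

lemma sat_Lb_corr (β : Formula)
    (IH : ∀ m, depthB β ≤ m+1 → ∀ Δ : CW,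
      (csat Δ β ↔ sat m (m+1) (corr true m Δ) (corr false (m+1) Δ) (wval Δ) β))
    (m : ℕ) (h : depthB β ≤ m+1) (Γ : CW) :
    csat Γ (.Lb β) ↔ ∀ p ∈ corr false (m+1) Γ, sat m (m+1) p.2 (corr false (m+1) Γ) p.1 β := by
  constructor
  · intro hc p hp
    rcases mem_corr.1 hp with ⟨Δ, hR, h1, h2⟩
    simp only [Bool.false_eq_true, if_false] at hR
    rw [h1, h2, corr_eq_B hR]
    exact (IH m h Δ).1 (hc Δ hR)
  · intro hs Δ hR
    have hmem : (⟨wval Δ, corr true m Δ⟩ : World × KStr m) ∈ corr false (m+1) Γ :=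
      mem_corr.2 ⟨Δ, by simpa using hR, rfl, rfl⟩
    have := hs _ hmem
    rw [corr_eq_B hR] at this
    exact (IH m h Δ).2 this

theorem Qmain : ∀ α : Formula, basic α →
    (∀ m, depthA α ≤ m+1 → ∀ Δ : CW,
      (csat Δ α ↔ sat (m+1) m (corr true (m+1) Δ) (corr false m Δ) (wval Δ) α)) ∧
    (∀ m, depthB α ≤ m+1 → ∀ Δ : CW,
      (csat Δ α ↔ sat m (m+1) (corr true m Δ) (corr false (m+1) Δ) (wval Δ) α)) := by
  intro α
  induction α with
  | atom p => exact fun _ => ⟨fun _ _ _ => by simp [csat, sat_atom, wval],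
                             fun _ _ _ => by simp [csat, sat_atom, wval]⟩
  | fls => exact fun _ => ⟨fun _ _ _ => by simp [csat, sat_fls],
                           fun _ _ _ => by simp [csat, sat_fls]⟩
  | neg β ihβ =>
    intro hb
    have ih := ihβ hb
    constructor <;> intro m h Δ
    · have := (ih.1 m (by simpa [depthA] using h) Δ)
      simp only [csat, sat_neg]; tauto
    · have := (ih.2 m (by simpa [depthB] using h) Δ)
      simp only [csat, sat_neg]; tauto
  | or β γ ihβ ihγ =>
    intro hb
    have ih1 := ihβ hb.1
    have ih2 := ihγ hb.2
    constructor <;> intro m h Δ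
    · simp only [depthA, max_le_iff] at h
      have := ih1.1 m h.1 Δ; have := ih2.1 m h.2 Δ
      simp only [csat, sat_or]; tauto
    · simp only [depthB, max_le_iff] at h
      have := ih1.2 m h.1 Δ; have := ih2.2 m h.2 Δ
      simp only [csat, sat_or]; tauto
  | La β ihβ =>
    intro hb
    have ih := ihβ hb
    constructor <;> intro m h Δ
    · rw [sat_La]
      exact sat_La_corr β ih.1 m (by simpa [depthA] using h) Δ
    · simp only [depthB] at h
      have h' : depthA β ≤ m := by omega
      have hm : 1 ≤ m := le_trans (depth_pos β).1 h'
      obtain ⟨m', rfl⟩ : ∃ m', m = m' + 1 := ⟨m - 1, by omega⟩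
      rw [sat_La]
      exact sat_La_corr β ih.1 m' h' Δ
  | Lb β ihβ =>
    intro hb
    have ih := ihβ hb
    constructor <;> intro m h Δ
    · simp only [depthA] at h
      have h' : depthB β ≤ m := by omega
      have hm : 1 ≤ m := le_trans (depth_pos β).2 h'
      obtain ⟨m', rfl⟩ : ∃ m', m = m' + 1 := ⟨m - 1, by omega⟩
      rw [sat_Lb]
      exact sat_Lb_corr β ih.2 m' h' Δ
    · rw [sat_Lb]
      exact sat_Lb_corr β ih.2 m (by simpa [depthB] using h) Δ
  | Na β _ => intro hb; exact absurd hb (by simp [basic])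
  | Nb β _ => intro hb; exact absurd hb (by simp [basic])

theorem main_corr : ∀ α : Formula, basic α → ∀ k j : ℕ, depthA α ≤ k → depthB α ≤ j →
    ∀ Γ : CW, (csat Γ α ↔ sat k j (corr true k Γ) (corr false j Γ) (wval Γ) α) := by
  intro α
  induction α with
  | atom p => intro _ k j hk hj Γ; simp [csat, sat_atom, wval]
  | fls => intro _ k j hk hj Γ; simp [csat, sat_fls]
  | neg β ihβ =>
    intro hb k j hk hj Γ
    have := ihβ hb k j (by simpa [depthA] using hk) (by simpa [depthB] using hj) Γ
    simp only [csat, sat_neg]; tauto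
  | or β γ ihβ ihγ =>
    intro hb k j hk hj Γ
    simp only [depthA, max_le_iff] at hk
    simp only [depthB, max_le_iff] at hj
    have := ihβ hb.1 k j hk.1 hj.1 Γ
    have := ihγ hb.2 k j hk.2 hj.2 Γ
    simp only [csat, sat_or]; tauto
  | La β _ =>
    intro hb k j hk hj Γ
    have hk' : depthA β ≤ k := by simpa [depthA] using hk
    have h1 : 1 ≤ k := le_trans (depth_pos β).1 hk'
    obtain ⟨k', rfl⟩ : ∃ k', k = k' + 1 := ⟨k - 1, by omega⟩
    rw [sat_La]
    exact sat_La_corr β (Qmain β hb).1 k' hk' Γ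
  | Lb β _ =>
    intro hb k j hk hj Γ
    have hj' : depthB β ≤ j := by simpa [depthB] using hj
    have h1 : 1 ≤ j := le_trans (depth_pos β).2 hj'
    obtain ⟨j', rfl⟩ : ∃ j', j = j' + 1 := ⟨j - 1, by omega⟩
    rw [sat_Lb]
    exact sat_Lb_corr β (Qmain β hb).2 j' hj' Γ
  | Na β _ => intro hb; exact absurd hb (by simp [basic])
  | Nb β _ => intro hb; exact absurd hb (by simp [basic])

/-- for basic formulas of a-depth ≤ k, b-depth ≤ j, truth at a
world of the K45_n canonical model coincides with truth at the corresponding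
(k,j)-model. -/
theorem canonical_correspondence (α : Formula) (hb : basic α) (hm : ONLminus α)
    (k j : ℕ) (hk : depthA α ≤ k) (hj : depthB α ≤ j) (Γ : CW) :
    csat Γ α ↔ sat k j (corr true k Γ) (corr false j Γ) (wval Γ) α :=
  main_corr α hb k j hk hj Γ
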